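/- Let X be a strongly 0-dimensional metrizable space. Then every open cover {U_i}_{i∈I} of X has a refinement {E_j}_{j∈J} such that each E_j is open in X, the E_j cover X, and E_j ∩ E_{j'} = ∅ whenever j ≠ j'; moreover each such E_j is clopen in X. -/

import Mathlib

open Set

/-- A space is strongly `0`-dimensional if disjoint closed sets are separated by a clopen set. -/
def StronglyZeroDim (X : Type*) [TopologicalSpace X] : Prop :=
  ∀ A B : Set X, IsClosed A → IsClosed B → Disjoint A B →
    ∃ V : Set X, IsClopen V ∧ A ⊆ V ∧ Disjoint V B

/-- Lemma 2.2: every open cover of a strongly `0`-dimensional metrizable space has an open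
pairwise disjoint refinement covering the space; each member of such a refinement is clopen. -/
theorem exists_pairwise_disjoint_open_refinement
    {X : Type*} [TopologicalSpace X] [TopologicalSpace.MetrizableSpace X]
    (hX : StronglyZeroDim X) {ι : Type*} (U : ι → Set X)
    (hUopen : ∀ i, IsOpen (U i)) (hUcover : ⋃ i, U i = Set.univ) :
    ∃ 𝒠 : Set (Set X),
      (∀ E ∈ 𝒠, ∃ i, E ⊆ U i) ∧
      (∀ E ∈ 𝒠, IsOpen E) ∧
      ⋃₀ 𝒠 = Set.univ ∧
      (𝒠.Pairwise fun E F => Disjoint E F) ∧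
      (∀ E ∈ 𝒠, IsClopen E) := by
  letI : MetricSpace X := TopologicalSpace.metrizableSpaceMetric X
  -- locally finite precise refinement
  obtain ⟨v, hvo, hvU, hvlf, hvu⟩ := precise_refinement U hUopen hUcover
  -- shrink to a cover whose closures fit inside v
  obtain ⟨w, hwcov, hwo, hwc⟩ := exists_subset_iUnion_closure_subset isClosed_univ hvo
    (fun x _ => hvlf.point_finite x) hvU.ge
  -- clopen sets between closure (w i) and v i
  have hW : ∀ i, ∃ Wi : Set X, IsClopen Wi ∧ closure (w i) ⊆ Wi ∧ Wi ⊆ v i := by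
    intro i
    obtain ⟨Wi, hcl, hsub, hdis⟩ := hX (closure (w i)) (v i)ᶜ isClosed_closure
      (hvo i).isClosed_compl (disjoint_compl_right_iff_subset.mpr (hwc i))
    exact ⟨Wi, hcl, hsub, disjoint_compl_right_iff_subset.mp hdis⟩
  choose W hWcl hWsub hWv using hW
  have hWlf : LocallyFinite W := hvlf.subset hWv
  -- well-order the index type and disjointify
  have hwoι : IsWellOrder ι WellOrderingRel := inferInstance
  set E : ι → Set X := fun i => W i \ ⋃ j : {j // WellOrderingRel j i}, W j with hE
  have hEclopen : ∀ i, IsClopen (E i) := by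
    intro i
    have hcl : IsClosed (⋃ j : {j // WellOrderingRel j i}, W j) :=
      (hWlf.comp_injective Subtype.val_injective).isClosed_iUnion fun j => (hWcl j).isClosed
    have hop : IsOpen (⋃ j : {j // WellOrderingRel j i}, W j) :=
      isOpen_iUnion fun j => (hWcl j).isOpen
    exact (hWcl i).diff ⟨hcl, hop⟩
  have hEsub : ∀ i, E i ⊆ W i := fun i => diff_subset
  refine ⟨Set.range E, ?_, ?_, ?_, ?_, ?_⟩
  · rintro _ ⟨i, rfl⟩
    exact ⟨i, (hEsub i).trans ((hWv i).trans (hvu i))⟩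
  · rintro _ ⟨i, rfl⟩
    exact (hEclopen i).isOpen
  · apply eq_univ_of_forall
    intro x
    have hS : {i | x ∈ W i}.Nonempty := by
      have hx : x ∈ ⋃ i, w i := hwcov (mem_univ x)
      obtain ⟨i, hi⟩ := mem_iUnion.mp hx
      exact ⟨i, hWsub i (subset_closure hi)⟩
    obtain ⟨m, hmS, hmin⟩ := (IsWellFounded.wf (r := WellOrderingRel)).has_min _ hS
    refine ⟨E m, ⟨m, rfl⟩, hmS, ?_⟩
    intro hx
    obtain ⟨⟨j, hji⟩, hj⟩ := mem_iUnion.mp hx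
    exact hmin j hj hji
  · rintro _ ⟨i, rfl⟩ _ ⟨j, rfl⟩ hne
    have hij : i ≠ j := fun h => hne (by rw [h])
    rcases trichotomous_of WellOrderingRel i j with h | h | h
    · refine Set.disjoint_left.mpr fun x hxi hxj => ?_
      exact hxj.2 (mem_iUnion.mpr ⟨⟨i, h⟩, hxi.1⟩)
    · exact absurd h hij
    · refine Set.disjoint_left.mpr fun x hxi hxj => ?_
      exact hxi.2 (mem_iUnion.mpr ⟨⟨j, h⟩, hxj.1⟩)
  · rintro _ ⟨i, rfl⟩
    exact hEclopen i
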